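/- Let q ≥ 3 be odd and p ≥ 6 even with p > q. Stacking a 3 × q magic rectangle A on {1,...,3q} above a (p−3) × q magic rectangle B on {3q+1,...,pq} yields a p × q matrix M with constant column sum y = p(pq+1)/2, first three row sums x = q(3q+1)/2, and remaining row sums z = q(pq+3q+1)/2, and these satisfy x < y, x < z, and y ≠ z; hence M gives a local antimagic labeling of K_{p,q} with exactly 3 induced sums. -/
import Mathlib


open scoped BigOperators

/-- The induced vertex sum: sum of labels of edges incident to `v`. -/
noncomputable def vertexSum {V : Type*} (G : SimpleGraph V) (f : Sym2 V → ℕ) (v : V) : ℕ :=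
  ∑ᶠ e ∈ G.incidenceSet v, f e

/-- `f` is a local antimagic labeling of `G`: a bijection from the edge set onto
`{1, …, |E(G)|}` such that adjacent vertices get distinct induced sums. -/
def IsLocalAntimagic {V : Type*} (G : SimpleGraph V) (f : Sym2 V → ℕ) : Prop :=
  Set.BijOn f G.edgeSet (Set.Icc 1 G.edgeSet.ncard) ∧
  ∀ u v, G.Adj u v → vertexSum G f u ≠ vertexSum G f v

/-- Number of distinct induced vertex labels of the labeling `f`. -/
noncomputable def colorCount {V : Type*} (G : SimpleGraph V) (f : Sym2 V → ℕ) : ℕ :=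
  (Set.range (vertexSum G f)).ncard

/-- The local antimagic chromatic number. -/
noncomputable def chiLA {V : Type*} (G : SimpleGraph V) : ℕ :=
  sInf { n | ∃ f, IsLocalAntimagic G f ∧ colorCount G f = n }

/-- The join `G ∨ Oₙ` of `G` with the empty graph on `n` vertices. -/
def joinEmpty {V : Type*} (G : SimpleGraph V) (n : ℕ) : SimpleGraph (V ⊕ Fin n) :=
  SimpleGraph.fromRel (fun x y =>
    (∃ a b, x = Sum.inl a ∧ y = Sum.inl b ∧ G.Adj a b) ∨ (x.isLeft ∧ y.isRight))

/-- `A` is a magic rectangle with entries exactly `{lo, …, hi}` (each used once),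
constant row sums and constant column sums. -/
def IsMagicRectangleOn {p q : ℕ} (A : Fin p → Fin q → ℕ) (lo hi : ℕ) : Prop :=
  (Set.range fun ij : Fin p × Fin q => A ij.1 ij.2) = Set.Icc lo hi ∧
  (Function.Injective fun ij : Fin p × Fin q => A ij.1 ij.2) ∧
  (∃ R, ∀ i, ∑ j, A i j = R) ∧ (∃ C, ∀ j, ∑ i, A i j = C)

lemma gauss_Ioc (n : ℕ) : (∑ k ∈ Finset.Ioc 0 n, k) * 2 = n * (n + 1) := by
  induction n with
  | zero => simp
  | succ m ih => rw [Finset.sum_Ioc_succ_top (Nat.zero_le _), Nat.add_mul, ih]; ring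

lemma icc_one_ioc (n : ℕ) : Finset.Icc 1 n = Finset.Ioc 0 n := rfl

lemma half_of_double (a t : ℕ) (h : a * 2 = t) : a = t / 2 := by omega

lemma half_lt (a b : ℕ) (ha : a % 2 = 0) (hb : b % 2 = 0) (h : a < b) : a / 2 < b / 2 := by
  omega

lemma half_inj (a b : ℕ) (ha : a % 2 = 0) (hb : b % 2 = 0) (h : a / 2 = b / 2) : a = b := by
  omega

lemma mr_total {m n lo hi : ℕ} (A : Fin m → Fin n → ℕ) (h : IsMagicRectangleOn A lo hi) :
    ∑ ij : Fin m × Fin n, A ij.1 ij.2 = ∑ k ∈ Finset.Icc lo hi, k := by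
  obtain ⟨hr, hinj, -, -⟩ := h
  apply Finset.sum_bij (fun ij _ => A ij.1 ij.2)
  · intro a _
    have : A a.1 a.2 ∈ Set.Icc lo hi := hr ▸ Set.mem_range_self a
    simpa using this
  · exact fun a _ b _ hab => hinj hab
  · intro b hb
    have : b ∈ Set.range fun ij : Fin m × Fin n => A ij.1 ij.2 := by
      rw [hr]; simpa using hb
    obtain ⟨a, ha⟩ := this
    exact ⟨a, Finset.mem_univ a, ha⟩
  · intros; rfl

lemma fin_sum_split (p : ℕ) (hp : 6 ≤ p) (g : Fin p → ℕ) :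
    ∑ i, g i = (∑ a : Fin 3, g ⟨a.val, by omega⟩) +
      ∑ b : Fin (p - 3), g ⟨3 + b.val, by have := b.isLt; omega⟩ := by
  have hpe : 3 + (p - 3) = p := by omega
  let e : Fin (3 + (p - 3)) ≃ Fin p := finCongr hpe
  rw [← Equiv.sum_comp e g,
    ← Equiv.sum_comp (finSumFinEquiv (m := 3) (n := p - 3)) (fun i => g (e i)),
    Fintype.sum_sum_type]
  have h1 : ∀ a : Fin 3, e (finSumFinEquiv (Sum.inl a)) = (⟨a.val, by omega⟩ : Fin p) :=
    fun a => Fin.ext (by simp [e])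
  have h2 : ∀ b : Fin (p - 3), e (finSumFinEquiv (Sum.inr b)) =
      (⟨3 + b.val, by have := b.isLt; omega⟩ : Fin p) :=
    fun b => Fin.ext (by simp [e])
  rw [Finset.sum_congr rfl fun a _ => congrArg g (h1 a),
      Finset.sum_congr rfl fun b _ => congrArg g (h2 b)]

lemma num_lt_xy (p q : ℕ) (hq : 3 ≤ q) (hp : 6 ≤ p) (hpq : q < p) :
    q * (3 * q + 1) < p * (p * q + 1) := by
  have h1 : q * q * q ≤ p * p * q := Nat.mul_le_mul (Nat.mul_le_mul hpq.le hpq.le) le_rfl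
  have h2 : 3 * q * q ≤ q * q * q := Nat.mul_le_mul (Nat.mul_le_mul hq le_rfl) le_rfl
  nlinarith [h1, h2]

lemma num_lt_xz (p q : ℕ) (hq : 3 ≤ q) (hp : 6 ≤ p) :
    q * (3 * q + 1) < q * (p * q + 3 * q + 1) := by
  have h1 : 0 < q * (p * q) := by positivity
  nlinarith [h1]

lemma num_ne (p q : ℕ) (hq : 3 ≤ q) (hpq : q < p)
    (h : p * (p * q + 1) = q * (p * q + 3 * q + 1)) : False := by
  have h1 : q * (p * q + 3 * q + 1) = q * (p * p) + p := by nlinarith [h]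
  have hdq : q ∣ p := by
    have h2 : q ∣ q * (p * p) + p := h1 ▸ Dvd.intro _ rfl
    exact (Nat.dvd_add_right (Dvd.intro _ rfl)).mp h2
  obtain ⟨k, hk⟩ := hdq
  have hq0 : 0 < q := by omega
  have hk2 : 2 ≤ k := by nlinarith
  subst hk
  have hc : k * (q * k * q + 1) = q * k * q + 3 * q + 1 :=
    Nat.eq_of_mul_eq_mul_left hq0 (by nlinarith [h])
  have h3 : q * q * k * 2 ≤ q * q * k * k := Nat.mul_le_mul_left _ hk2
  nlinarith [hc, h3, hq, hk2]

theorem Kpq_stacked_construction (p q : ℕ) (hq : 3 ≤ q) (hqo : q % 2 = 1)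
    (hp : 6 ≤ p) (hpe : p % 2 = 0) (hpq : q < p)
    (A : Fin 3 → Fin q → ℕ) (hA : IsMagicRectangleOn A 1 (3 * q))
    (B : Fin (p - 3) → Fin q → ℕ) (hB : IsMagicRectangleOn B (3 * q + 1) (p * q))
    (M : Fin p → Fin q → ℕ)
    (hM : ∀ i j, M i j = if h : (i : ℕ) < 3 then A ⟨i, h⟩ j
      else B ⟨(i : ℕ) - 3, by have := i.isLt; omega⟩ j) :
    (∀ j, ∑ i, M i j = p * (p * q + 1) / 2) ∧
    (∀ i : Fin p, (i : ℕ) < 3 → ∑ j, M i j = q * (3 * q + 1) / 2) ∧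
    (∀ i : Fin p, 3 ≤ (i : ℕ) → ∑ j, M i j = q * (p * q + 3 * q + 1) / 2) ∧
    q * (3 * q + 1) / 2 < p * (p * q + 1) / 2 ∧
    q * (3 * q + 1) / 2 < q * (p * q + 3 * q + 1) / 2 ∧
    p * (p * q + 1) / 2 ≠ q * (p * q + 3 * q + 1) / 2 ∧
    ∃ f, IsLocalAntimagic (completeBipartiteGraph (Fin p) (Fin q)) f ∧
      colorCount (completeBipartiteGraph (Fin p) (Fin q)) f = 3 := by
  classical
  obtain ⟨RA, hRA⟩ := hA.2.2.1
  obtain ⟨CA, hCA⟩ := hA.2.2.2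
  obtain ⟨RB, hRB⟩ := hB.2.2.1
  obtain ⟨CB, hCB⟩ := hB.2.2.2
  have hq0 : 0 < q := by omega
  have tA := mr_total A hA
  have tB := mr_total B hB
  have eAr : ∑ ij : Fin 3 × Fin q, A ij.1 ij.2 = 3 * RA := by
    rw [Fintype.sum_prod_type]; simp [hRA, mul_comm]
  have eAc : ∑ ij : Fin 3 × Fin q, A ij.1 ij.2 = q * CA := by
    rw [Fintype.sum_prod_type_right]; simp [hCA, mul_comm]
  have eBr : ∑ ij : Fin (p - 3) × Fin q, B ij.1 ij.2 = (p - 3) * RB := by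
    rw [Fintype.sum_prod_type]; simp [hRB, mul_comm]
  have eBc : ∑ ij : Fin (p - 3) × Fin q, B ij.1 ij.2 = q * CB := by
    rw [Fintype.sum_prod_type_right]; simp [hCB, mul_comm]
  have hS1 : (∑ k ∈ Finset.Icc 1 (3 * q), k) * 2 = 3 * q * (3 * q + 1) := by
    rw [icc_one_ioc, gauss_Ioc]
  have hStot : (∑ k ∈ Finset.Icc 1 (p * q), k) * 2 = p * q * (p * q + 1) := by
    rw [icc_one_ioc, gauss_Ioc]
  have h3qpq : 3 * q ≤ p * q := Nat.mul_le_mul_right q (by omega)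
  have hsplit : (∑ k ∈ Finset.Icc 1 (3 * q), k) + ∑ k ∈ Finset.Icc (3 * q + 1) (p * q), k
      = ∑ k ∈ Finset.Icc 1 (p * q), k := by
    rw [icc_one_ioc, icc_one_ioc, Finset.Icc_add_one_left_eq_Ioc]
    exact Finset.sum_Ioc_consecutive _ (Nat.zero_le _) h3qpq
  have hRA2 : RA * 2 = q * (3 * q + 1) :=
    Nat.eq_of_mul_eq_mul_left (show 0 < 3 by norm_num) (by linarith [tA, eAr, hS1])
  have key : ∀ m n : ℕ, 3 * n * (3 * n + 1) + m * (n * ((m + 3) * n + 3 * n + 1))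
      = (m + 3) * n * ((m + 3) * n + 1) := by intros; ring
  have keyp := key (p - 3) q
  rw [show p - 3 + 3 = p by omega] at keyp
  have hRB2 : RB * 2 = q * (p * q + 3 * q + 1) := by
    refine Nat.eq_of_mul_eq_mul_left (show 0 < p - 3 by omega) ?_
    have h1 : 3 * q * (3 * q + 1) + ((p - 3) * RB) * 2 = p * q * (p * q + 1) := by
      linarith [tA, tB, eAr, hS1, hStot, hsplit, eBr]
    linarith [keyp, h1]
  have key2 : p * q * (p * q + 1) = q * (p * (p * q + 1)) := by ring
  have hCAB2 : (CA + CB) * 2 = p * (p * q + 1) := by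
    refine Nat.eq_of_mul_eq_mul_left hq0 ?_
    have h1 : (q * CA) * 2 + (q * CB) * 2 = p * q * (p * q + 1) := by
      linarith [tA, tB, eAc, eBc, hS1, hStot, hsplit]
    linarith [key2, h1]
  have hMA : ∀ (i : Fin p) (h : (i : ℕ) < 3) (j : Fin q), M i j = A ⟨i.val, h⟩ j :=
    fun i h j => by rw [hM]; exact dif_pos h
  have hMB : ∀ (i : Fin p) (h : ¬ (i : ℕ) < 3) (j : Fin q),
      M i j = B ⟨i.val - 3, by have := i.isLt; omega⟩ j :=
    fun i h j => by rw [hM]; exact dif_neg h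
  have hAmem : ∀ (a : Fin 3) (j : Fin q), A a j ∈ Set.Icc 1 (3 * q) := by
    intro a j
    rw [← hA.1]
    exact ⟨(a, j), rfl⟩
  have hBmem : ∀ (b : Fin (p - 3)) (j : Fin q), B b j ∈ Set.Icc (3 * q + 1) (p * q) := by
    intro b j
    rw [← hB.1]
    exact ⟨(b, j), rfl⟩
  have hMlow : ∀ (i : Fin p) (h : (i : ℕ) < 3) (j : Fin q),
      1 ≤ M i j ∧ M i j ≤ 3 * q := by
    intro i h j
    rw [hMA i h j]
    exact Set.mem_Icc.mp (hAmem _ j)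
  have hMhigh : ∀ (i : Fin p) (h : ¬ (i : ℕ) < 3) (j : Fin q),
      3 * q + 1 ≤ M i j ∧ M i j ≤ p * q := by
    intro i h j
    rw [hMB i h j]
    exact Set.mem_Icc.mp (hBmem _ j)
  have rowMx : ∀ i : Fin p, (i : ℕ) < 3 → ∑ j, M i j = RA := by
    intro i h
    rw [Finset.sum_congr rfl fun j _ => hMA i h j]
    exact hRA ⟨i.val, h⟩
  have rowMz : ∀ i : Fin p, 3 ≤ (i : ℕ) → ∑ j, M i j = RB := by
    intro i h
    rw [Finset.sum_congr rfl fun j _ => hMB i (by omega) j]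
    exact hRB _
  have colM : ∀ j : Fin q, ∑ i, M i j = CA + CB := by
    intro j
    rw [fin_sum_split p hp (fun i => M i j)]
    congr 1
    · rw [Finset.sum_congr rfl fun a _ => hMA ⟨a.val, by omega⟩ a.isLt j]
      rw [Finset.sum_congr rfl fun a (_ : a ∈ Finset.univ) =>
        congrArg (fun x => A x j) (Fin.ext rfl : (⟨a.val, a.isLt⟩ : Fin 3) = a)]
      exact hCA j
    · rw [Finset.sum_congr rfl fun b _ => hMB ⟨3 + b.val, by have := b.isLt; omega⟩ (by simp) j]
      rw [Finset.sum_congr rfl fun b (_ : b ∈ Finset.univ) =>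
        congrArg (fun x => B x j) (Fin.ext (by simp) :
          (⟨3 + b.val - 3, by have := b.isLt; omega⟩ : Fin (p - 3)) = b)]
      exact hCB j
  have hMinj : Function.Injective (fun ij : Fin p × Fin q => M ij.1 ij.2) := by
    rintro ⟨i1, j1⟩ ⟨i2, j2⟩ h
    simp only at h
    by_cases h1 : (i1 : ℕ) < 3 <;> by_cases h2 : (i2 : ℕ) < 3
    · rw [hMA i1 h1, hMA i2 h2] at h
      have h12 := hA.2.1 (show (fun ij : Fin 3 × Fin q => A ij.1 ij.2) (⟨i1.val, h1⟩, j1)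
        = (fun ij : Fin 3 × Fin q => A ij.1 ij.2) (⟨i2.val, h2⟩, j2) from h)
      rw [Prod.ext_iff] at h12 ⊢
      exact ⟨Fin.ext (by simpa using congrArg Fin.val h12.1), h12.2⟩
    · have m1 := hMlow i1 h1 j1
      have m2 := hMhigh i2 h2 j2
      omega
    · have m1 := hMhigh i1 h1 j1
      have m2 := hMlow i2 h2 j2
      omega
    · rw [hMB i1 h1, hMB i2 h2] at h
      have h12 := hB.2.1 (show (fun ij : Fin (p - 3) × Fin q => B ij.1 ij.2)
        (⟨i1.val - 3, by have := i1.isLt; omega⟩, j1)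
        = (fun ij : Fin (p - 3) × Fin q => B ij.1 ij.2)
        (⟨i2.val - 3, by have := i2.isLt; omega⟩, j2) from h)
      simp only [Prod.mk.injEq] at h12 ⊢
      have hv : i1.val - 3 = i2.val - 3 := congrArg Fin.val h12.1
      exact ⟨Fin.ext (by omega), h12.2⟩
  have hMmem : ∀ (i : Fin p) (j : Fin q), M i j ∈ Set.Icc 1 (p * q) := by
    intro i j
    rw [Set.mem_Icc]
    by_cases h : (i : ℕ) < 3
    · have := hMlow i h j
      omega
    · have := hMhigh i h j
      omega
  have hMrange : Set.range (fun ij : Fin p × Fin q => M ij.1 ij.2) = Set.Icc 1 (p * q) := by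
    apply Set.eq_of_subset_of_subset
    · rintro k ⟨⟨i, j⟩, rfl⟩
      exact hMmem i j
    · intro k hk
      rw [Set.mem_Icc] at hk
      by_cases hk3 : k ≤ 3 * q
      · have hmem : k ∈ Set.Icc 1 (3 * q) := Set.mem_Icc.mpr ⟨hk.1, hk3⟩
        rw [← hA.1] at hmem
        obtain ⟨⟨a, j⟩, ha⟩ := hmem
        refine ⟨(⟨a.val, by have := a.isLt; omega⟩, j), ?_⟩
        show M _ j = k
        rw [hMA _ a.isLt j, show (⟨a.val, a.isLt⟩ : Fin 3) = a from Fin.ext rfl]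
        exact ha
      · have hmem : k ∈ Set.Icc (3 * q + 1) (p * q) := Set.mem_Icc.mpr ⟨by omega, hk.2⟩
        rw [← hB.1] at hmem
        obtain ⟨⟨b, j⟩, hb⟩ := hmem
        refine ⟨(⟨3 + b.val, by have := b.isLt; omega⟩, j), ?_⟩
        show M _ j = k
        rw [hMB _ (by simp) j,
          show (⟨3 + b.val - 3, by have := b.isLt; omega⟩ : Fin (p - 3)) = b from
            Fin.ext (by simp)]
        exact hb
  -- parities
  have hp2 : 2 ∣ p := Nat.dvd_of_mod_eq_zero hpe
  have hpq2 : (2 : ℕ) ∣ p * q := hp2.mul_right q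
  have evx : q * (3 * q + 1) % 2 = 0 := by
    have h1 : (3 * q + 1) % 2 = 0 := by omega
    rw [Nat.mul_mod, h1]
    simp
  have evy : p * (p * q + 1) % 2 = 0 := by
    rw [Nat.mul_mod, hpe]
    simp
  have evz : q * (p * q + 3 * q + 1) % 2 = 0 := by
    have h1 : (p * q + 3 * q + 1) % 2 = 0 := by omega
    rw [Nat.mul_mod, h1]
    simp
  have hxy : q * (3 * q + 1) < p * (p * q + 1) := num_lt_xy p q hq hp hpq
  have hxz : q * (3 * q + 1) < q * (p * q + 3 * q + 1) := num_lt_xz p q hq hp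
  have hyz_num : p * (p * q + 1) ≠ q * (p * q + 3 * q + 1) := fun h => num_ne p q hq hpq h
  have dxy : RA ≠ CA + CB := by
    have : RA < CA + CB := by linarith [hRA2, hCAB2, hxy]
    omega
  have dxz : RA ≠ RB := by
    have : RA < RB := by linarith [hRA2, hRB2, hxz]
    omega
  have dyz : CA + CB ≠ RB := fun hEq => hyz_num (by rw [← hCAB2, ← hRB2, hEq])
  -- graph setup
  set G := completeBipartiteGraph (Fin p) (Fin q) with hG
  set E : Fin p × Fin q → Sym2 (Fin p ⊕ Fin q) :=
    fun ij => s(Sum.inl ij.1, Sum.inr ij.2) with hE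
  have hEinj : Function.Injective E := by
    rintro ⟨a1, a2⟩ ⟨b1, b2⟩ h
    simpa [hE, Sym2.eq_iff, Prod.ext_iff] using h
  have hedge : G.edgeSet = Set.range E := by
    ext e
    induction e using Sym2.ind with
    | _ x y =>
      cases x <;> cases y <;>
        simp [hG, hE, SimpleGraph.mem_edgeSet, Sym2.eq_iff, Prod.exists, eq_comm]
  have hincl : ∀ i : Fin p, G.incidenceSet (Sum.inl i) =
      Set.range (fun j : Fin q => E (i, j)) := by
    intro i
    ext e
    induction e using Sym2.ind with
    | _ x y =>
      cases x <;> cases y <;>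
        simp [hG, hE, SimpleGraph.incidenceSet, SimpleGraph.mem_edgeSet, Sym2.eq_iff, eq_comm]
  have hincr : ∀ j : Fin q, G.incidenceSet (Sum.inr j) =
      Set.range (fun i : Fin p => E (i, j)) := by
    intro j
    ext e
    induction e using Sym2.ind with
    | _ x y =>
      cases x <;> cases y <;>
        simp [hG, hE, SimpleGraph.incidenceSet, SimpleGraph.mem_edgeSet, Sym2.eq_iff, eq_comm]
  set g : (Fin p ⊕ Fin q) → (Fin p ⊕ Fin q) → ℕ :=
    fun x y => Sum.elim (fun i => Sum.elim (fun _ => 0) (fun j => M i j) y)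
      (fun j => Sum.elim (fun i => M i j) (fun _ => 0) y) x with hg
  have hgsymm : ∀ x y, g x y = g y x := by rintro (i | j) (i' | j') <;> rfl
  set f : Sym2 (Fin p ⊕ Fin q) → ℕ := Sym2.lift ⟨g, hgsymm⟩ with hf
  have hfE : ∀ ij : Fin p × Fin q, f (E ij) = M ij.1 ij.2 := fun ij => rfl
  have hvl : ∀ i : Fin p, vertexSum G f (Sum.inl i) = ∑ j, M i j := by
    intro i
    rw [vertexSum, hincl i, finsum_mem_range (fun j j' h => by
      simpa [hE, Sym2.eq_iff] using h), finsum_eq_sum_of_fintype]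
    exact Finset.sum_congr rfl fun j _ => hfE (i, j)
  have hvr : ∀ j : Fin q, vertexSum G f (Sum.inr j) = ∑ i, M i j := by
    intro j
    rw [vertexSum, hincr j, finsum_mem_range (fun i i' h => by
      simpa [hE, Sym2.eq_iff] using h), finsum_eq_sum_of_fintype]
    exact Finset.sum_congr rfl fun i _ => hfE (i, j)
  have hcard : G.edgeSet.ncard = p * q := by
    rw [hedge, ← Set.image_univ, Set.ncard_image_of_injective _ hEinj, Set.ncard_univ]
    simp [Nat.card_eq_fintype_card]
  refine ⟨?_, ?_, ?_, ?_, ?_, ?_, ?_⟩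
  · intro j
    rw [colM j]
    exact half_of_double _ _ hCAB2
  · intro i h
    rw [rowMx i h]
    exact half_of_double _ _ hRA2
  · intro i h
    rw [rowMz i h]
    exact half_of_double _ _ hRB2
  · exact half_lt _ _ evx evy hxy
  · exact half_lt _ _ evx evz hxz
  · exact fun h => hyz_num (half_inj _ _ evy evz h)
  · refine ⟨f, ⟨?_, ?_⟩, ?_⟩
    · rw [hcard]
      refine ⟨?_, ?_, ?_⟩
      · intro e he
        rw [hedge] at he
        obtain ⟨ij, rfl⟩ := he
        rw [hfE]
        exact hMrange ▸ Set.mem_range_self ij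
      · intro e1 h1 e2 h2 hfe
        rw [hedge] at h1 h2
        obtain ⟨ij1, rfl⟩ := h1
        obtain ⟨ij2, rfl⟩ := h2
        rw [hfE, hfE] at hfe
        exact congrArg E (hMinj hfe)
      · intro k hk
        rw [← hMrange] at hk
        obtain ⟨ij, hij⟩ := hk
        exact ⟨E ij, hedge ▸ Set.mem_range_self ij, by rw [hfE]; exact hij⟩
    · intro u v huv
      rcases u with i | j <;> rcases v with i' | j'
      · simp [hG] at huv
      · rw [hvl, hvr, colM]
        by_cases h : (i : ℕ) < 3
        · rw [rowMx i h]; exact dxy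
        · rw [rowMz i (by omega)]
          exact fun hEq => dyz hEq.symm
      · rw [hvl, hvr, colM]
        by_cases h : (i' : ℕ) < 3
        · rw [rowMx i' h]; exact fun hEq => dxy hEq.symm
        · rw [rowMz i' (by omega)]; exact dyz
      · simp [hG] at huv
    · show (Set.range (vertexSum G f)).ncard = 3
      have hr : Set.range (vertexSum G f) = {RA, CA + CB, RB} := by
        ext n
        simp only [Set.mem_range, Set.mem_insert_iff, Set.mem_singleton_iff]
        constructor
        · rintro ⟨v, rfl⟩
          rcases v with i | j
          · by_cases h : (i : ℕ) < 3
            · left; rw [hvl, rowMx i h]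
            · right; right; rw [hvl, rowMz i (by omega)]
          · right; left; rw [hvr, colM]
        · rintro (rfl | rfl | rfl)
          · exact ⟨Sum.inl ⟨0, by omega⟩, by rw [hvl, rowMx _ (by simp)]⟩
          · exact ⟨Sum.inr ⟨0, by omega⟩, by rw [hvr, colM]⟩
          · exact ⟨Sum.inl ⟨3, by omega⟩, by rw [hvl, rowMz _ (by simp)]⟩
      rw [hr]
      exact Set.ncard_eq_three.mpr ⟨RA, CA + CB, RB, dxy, dxz, dyz, rfl⟩
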